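/- Let a < b be real numbers and let f : (a,b) → ℝ be a function such that for each k ∈ {0, 1, ..., n+1} the one-sided limit f^{(k)}(a+) = lim_{x→a+} f^{(k)}(x) exists and is finite (f being n+1 times differentiable on (a,b)), and the one-sided limit f(b-) = lim_{x→b-} f(x) exists and is finite. Then for all x ∈ (a,b): sgn(𝕋_n(x) - 𝕋_{n+1}(x)) = sgn(f(b-) - T_n(b)), where T_n(x) = Σ_{k=0}^{n} f^{(k)}(a+)/k! (x-a)^k and, for m ≥ 1, 𝕋_m(x) = T_{m-1}(x) + (f(b-) - T_{m-1}(b))·((x-a)/(b-a))^m, with 𝕋_0(x) = f(b-). -/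

import Mathlib

open Real Set Filter

theorem sign_second_taylor_difference
    (a b : ℝ) (hab : a < b) (f : ℝ → ℝ) (n : ℕ)
    (hdiff : ∀ k < n + 1, DifferentiableOn ℝ (iteratedDeriv k f) (Ioo a b))
    (la : ℕ → ℝ)
    (hla : ∀ k ≤ n + 1, Tendsto (iteratedDeriv k f) (nhdsWithin a (Ioo a b)) (nhds (la k)))
    (lb : ℝ)
    (hlb : Tendsto f (nhdsWithin b (Ioo a b)) (nhds lb)) :
    ∀ x ∈ Ioo a b,
      Real.sign
        (((∑ k ∈ Finset.range n, la k / (Nat.factorial k : ℝ) * (x - a) ^ k) +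
            (lb - ∑ k ∈ Finset.range n, la k / (Nat.factorial k : ℝ) * (b - a) ^ k) *
              ((x - a) / (b - a)) ^ n) -
         ((∑ k ∈ Finset.range (n + 1), la k / (Nat.factorial k : ℝ) * (x - a) ^ k) +
            (lb - ∑ k ∈ Finset.range (n + 1), la k / (Nat.factorial k : ℝ) * (b - a) ^ k) *
              ((x - a) / (b - a)) ^ (n + 1))) =
      Real.sign (lb - ∑ k ∈ Finset.range (n + 1), la k / (Nat.factorial k : ℝ) * (b - a) ^ k) := by
  intro x hx
  obtain ⟨hax, hxb⟩ := hx
  have hba : (0:ℝ) < b - a := by linarith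
  set t : ℝ := (x - a) / (b - a) with ht
  have ht0 : 0 < t := div_pos (by linarith) hba
  have ht1 : t < 1 := (div_lt_one hba).mpr (by linarith)
  have hxa : x - a = (b - a) * t := by rw [ht]; field_simp [hba.ne']
  set D : ℝ := lb - ∑ k ∈ Finset.range (n + 1), la k / (Nat.factorial k : ℝ) * (b - a) ^ k
    with hD
  have key :
      (((∑ k ∈ Finset.range n, la k / (Nat.factorial k : ℝ) * (x - a) ^ k) +
            (lb - ∑ k ∈ Finset.range n, la k / (Nat.factorial k : ℝ) * (b - a) ^ k) *
              ((x - a) / (b - a)) ^ n) -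
         ((∑ k ∈ Finset.range (n + 1), la k / (Nat.factorial k : ℝ) * (x - a) ^ k) +
            (lb - ∑ k ∈ Finset.range (n + 1), la k / (Nat.factorial k : ℝ) * (b - a) ^ k) *
              ((x - a) / (b - a)) ^ (n + 1))) = D * (t ^ n * (1 - t)) := by
    have hdiv : (b - a) * t / (b - a) = t := by field_simp
    rw [hD, Finset.sum_range_succ, Finset.sum_range_succ, hxa, hdiv, mul_pow]
    ring
  rw [key]
  have hp : 0 < t ^ n * (1 - t) := mul_pos (pow_pos ht0 n) (by linarith)
  rcases lt_trichotomy D 0 with hDlt | hDeq | hDgt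
  · rw [Real.sign_of_neg hDlt, Real.sign_of_neg (mul_neg_of_neg_of_pos hDlt hp)]
  · simp [hDeq]
  · rw [Real.sign_of_pos hDgt, Real.sign_of_pos (mul_pos hDgt hp)]
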